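/- Let I, J, K be countable types with degree functions deg_X : I → ℕ, deg_Y : J → ℕ, deg_W : K → ℕ taking values ≥ 1, extended to finitely supported functions as usual. Let t ∈ (0,1) and assume the families (t^{deg_X(α)})_α, (t^{deg_Y(γ)})_γ, (t^{deg_W(β)})_β are summable with positive sums Z_X(t), Z_Y(t), Z_W(t), and set P(α) = t^{deg_X(α)}/Z_X(t), Q(γ) = t^{deg_Y(γ)}/Z_Y(t), R(β) = t^{deg_W(β)}/Z_W(t). Let F : (I →₀ ℕ) → (J →₀ ℕ) and G : (J →₀ ℕ) → (K →₀ ℕ) satisfy deg_Y(F(α)) = deg_X(α) and deg_W(G(γ)) = deg_Y(γ) for all α, γ. Then ∑_α P(α)·log( R(G(F(α))) / P(α) ) = ∑_α P(α)·log( Q(F(α)) / P(α) ) + ∑_γ Q(γ)·log( R(G(γ)) / Q(γ) ). -/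

import Mathlib

/-- The degree of an effective zero-cycle `α : I →₀ ℕ`, `deg(α) = ∑_i α(i)·deg(i)`. -/
def wdeg {I : Type*} (deg : I → ℕ) (α : I →₀ ℕ) : ℕ := α.sum fun i n => n * deg i

lemma tsum_prob_mul_const {ι : Type*} (f : ι → ℝ) (hZ : (∑' i, f i) ≠ 0) (c : ℝ) :
    ∑' i, (f i / ∑' i', f i') * c = c := by
  rw [tsum_mul_right, tsum_div_const, div_self hZ, one_mul]

lemma ratio_eq (x a b : ℝ) (hx : x ≠ 0) : (x / a) / (x / b) = b / a := by
  rcases eq_or_ne a 0 with rfl | ha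
  · simp
  rcases eq_or_ne b 0 with rfl | hb
  · simp
  field_simp

/-- additivity under composition of the Hasse–Weil information loss of proper
morphisms: `I_HW((g∘f)_*) = I_HW(f_*) + I_HW(g_*)`. -/
theorem stmt_15 {I J K : Type*} [Countable I] [Countable J] [Countable K]
    (degX : I → ℕ) (degY : J → ℕ) (degW : K → ℕ)
    (hdX : ∀ i, 1 ≤ degX i) (hdY : ∀ j, 1 ≤ degY j) (hdW : ∀ k, 1 ≤ degW k)
    (t : ℝ) (ht0 : 0 < t) (ht1 : t < 1)
    (hZX : Summable fun α : I →₀ ℕ => t ^ wdeg degX α)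
    (hZY : Summable fun γ : J →₀ ℕ => t ^ wdeg degY γ)
    (hZW : Summable fun β : K →₀ ℕ => t ^ wdeg degW β)
    (hZXpos : 0 < ∑' α : I →₀ ℕ, t ^ wdeg degX α)
    (hZYpos : 0 < ∑' γ : J →₀ ℕ, t ^ wdeg degY γ)
    (hZWpos : 0 < ∑' β : K →₀ ℕ, t ^ wdeg degW β)
    (F : (I →₀ ℕ) → (J →₀ ℕ)) (G : (J →₀ ℕ) → (K →₀ ℕ))
    (hF : ∀ α, wdeg degY (F α) = wdeg degX α)
    (hG : ∀ γ, wdeg degW (G γ) = wdeg degY γ) :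
    ∑' α : I →₀ ℕ,
        (t ^ wdeg degX α / ∑' α' : I →₀ ℕ, t ^ wdeg degX α')
          * Real.log ((t ^ wdeg degW (G (F α)) / ∑' β : K →₀ ℕ, t ^ wdeg degW β)
              / (t ^ wdeg degX α / ∑' α' : I →₀ ℕ, t ^ wdeg degX α'))
      = (∑' α : I →₀ ℕ,
          (t ^ wdeg degX α / ∑' α' : I →₀ ℕ, t ^ wdeg degX α')
            * Real.log ((t ^ wdeg degY (F α) / ∑' γ : J →₀ ℕ, t ^ wdeg degY γ)
                / (t ^ wdeg degX α / ∑' α' : I →₀ ℕ, t ^ wdeg degX α')))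
        + ∑' γ : J →₀ ℕ,
            (t ^ wdeg degY γ / ∑' γ' : J →₀ ℕ, t ^ wdeg degY γ')
              * Real.log ((t ^ wdeg degW (G γ) / ∑' β : K →₀ ℕ, t ^ wdeg degW β)
                  / (t ^ wdeg degY γ / ∑' γ' : J →₀ ℕ, t ^ wdeg degY γ')) := by
  set ZX := ∑' α : I →₀ ℕ, t ^ wdeg degX α with hZXdef
  set ZY := ∑' γ : J →₀ ℕ, t ^ wdeg degY γ with hZYdef
  set ZW := ∑' β : K →₀ ℕ, t ^ wdeg degW β with hZWdef
  have hpow : ∀ n : ℕ, (t : ℝ) ^ n ≠ 0 := fun n => (pow_pos ht0 n).ne'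
  have h1 : ∀ α : I →₀ ℕ,
      (t ^ wdeg degW (G (F α)) / ZW) / (t ^ wdeg degX α / ZX) = ZX / ZW := by
    intro α
    rw [hG, hF, ratio_eq _ _ _ (hpow _)]
  have h2 : ∀ α : I →₀ ℕ,
      (t ^ wdeg degY (F α) / ZY) / (t ^ wdeg degX α / ZX) = ZX / ZY := by
    intro α
    rw [hF, ratio_eq _ _ _ (hpow _)]
  have h3 : ∀ γ : J →₀ ℕ,
      (t ^ wdeg degW (G γ) / ZW) / (t ^ wdeg degY γ / ZY) = ZY / ZW := by
    intro γ
    rw [hG, ratio_eq _ _ _ (hpow _)]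
  simp only [h1, h2, h3]
  rw [tsum_prob_mul_const _ hZXpos.ne', tsum_prob_mul_const _ hZXpos.ne',
    tsum_prob_mul_const _ hZYpos.ne']
  rw [Real.log_div hZXpos.ne' hZWpos.ne', Real.log_div hZXpos.ne' hZYpos.ne',
    Real.log_div hZYpos.ne' hZWpos.ne']
  ring
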